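/- In ℂ_q[SU_N], every element p of ker(α_N) — where α_N : ℂ_q[SU_N] → ℂ_q[U_{N−1}] is the Hopf algebra surjection with α_N(u^1_1) = det_{N−1}⁻¹, α_N(u^1_i) = α_N(u^i_1) = 0 for i ≠ 1, and α_N(u^i_j) = u^{i−1}_{j−1} for i,j ≥ 2 — can be written as p = Σ_{i=2}^N u^i_1 f_i + Σ_{i=2}^N u^1_i g_i with f_i, g_i ∈ ℂ_q[SU_N]. -/

import Mathlib

open TensorProduct

/-- Entries of the standard type-A R-matrix. -/
noncomputable def Rent (q : ℝ) {N : ℕ} (i k j l : Fin N) : ℂ :=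
  (if i = k then (q : ℂ) else 1) * (if i = l then 1 else 0) * (if k = j then 1 else 0)
    + ((q : ℂ) - (q : ℂ)⁻¹) * (if i < k then 1 else 0) *
        (if i = j then 1 else 0) * (if k = l then 1 else 0)

/-- The quantum determinant, as an element of the free algebra on the `N²` generators. -/
noncomputable def qdetF (q : ℝ) (N : ℕ) : FreeAlgebra ℂ (Fin N × Fin N) :=
  ∑ π : Equiv.Perm (Fin N),
    ((-(q : ℂ)) ^
        ((Finset.univ.filter fun p : Fin N × Fin N => p.1 < p.2 ∧ π p.2 < π p.1).card)) •
      (List.ofFn fun i : Fin N => FreeAlgebra.ι ℂ (i, π i)).prod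

/-- The defining relations of `ℂ_q[SU_N]`: the FRT relations together with `det_N = 1`. -/
inductive suRel (q : ℝ) (N : ℕ) :
    FreeAlgebra ℂ (Fin N × Fin N) → FreeAlgebra ℂ (Fin N × Fin N) → Prop
  | frt (a b c d : Fin N) : suRel q N
      (∑ w : Fin N, ∑ x : Fin N,
        Rent q a c w x • (FreeAlgebra.ι ℂ (w, b) * FreeAlgebra.ι ℂ (x, d)))
      (∑ y : Fin N, ∑ z : Fin N,
        Rent q y z b d • (FreeAlgebra.ι ℂ (a, y) * FreeAlgebra.ι ℂ (c, z)))
  | det : suRel q N (qdetF q N) 1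

/-- The quantized coordinate ring `ℂ_q[SU_N]`. -/
abbrev SUq (q : ℝ) (N : ℕ) := RingQuot (suRel q N)

/-- The generators `u^i_j` of `ℂ_q[SU_N]`. -/
noncomputable def ugen (q : ℝ) (N : ℕ) (i j : Fin N) : SUq q N :=
  RingQuot.mkAlgHom ℂ (suRel q N) (FreeAlgebra.ι ℂ (i, j))

/-- The quantum determinant in the free algebra on generators `u^i_j` plus one extra
generator (the inverse of the determinant). -/
noncomputable def qdetF' (q : ℝ) (n : ℕ) : FreeAlgebra ℂ ((Fin n × Fin n) ⊕ Unit) :=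
  ∑ π : Equiv.Perm (Fin n),
    ((-(q : ℂ)) ^
        ((Finset.univ.filter fun p : Fin n × Fin n => p.1 < p.2 ∧ π p.2 < π p.1).card)) •
      (List.ofFn fun i : Fin n => FreeAlgebra.ι ℂ (Sum.inl (i, π i))).prod

/-- The defining relations of `ℂ_q[U_n]`: the FRT relations together with the relations
making the extra generator a two-sided inverse of `det_n`. -/
inductive uqRel (q : ℝ) (n : ℕ) :
    FreeAlgebra ℂ ((Fin n × Fin n) ⊕ Unit) → FreeAlgebra ℂ ((Fin n × Fin n) ⊕ Unit) → Prop
  | frt (a b c d : Fin n) : uqRel q n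
      (∑ w : Fin n, ∑ x : Fin n,
        Rent q a c w x • (FreeAlgebra.ι ℂ (Sum.inl (w, b)) * FreeAlgebra.ι ℂ (Sum.inl (x, d))))
      (∑ y : Fin n, ∑ z : Fin n,
        Rent q y z b d • (FreeAlgebra.ι ℂ (Sum.inl (a, y)) * FreeAlgebra.ι ℂ (Sum.inl (c, z))))
  | detinv_left : uqRel q n (FreeAlgebra.ι ℂ (Sum.inr ()) * qdetF' q n) 1
  | detinv_right : uqRel q n (qdetF' q n * FreeAlgebra.ι ℂ (Sum.inr ())) 1

/-- The quantized coordinate ring `ℂ_q[U_n]`. -/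
abbrev Uq (q : ℝ) (n : ℕ) := RingQuot (uqRel q n)

/-- The generators `u^i_j` of `ℂ_q[U_n]`. -/
noncomputable def upgen (q : ℝ) (n : ℕ) (i j : Fin n) : Uq q n :=
  RingQuot.mkAlgHom ℂ (uqRel q n) (FreeAlgebra.ι ℂ (Sum.inl (i, j)))

/-- The inverse `det_n⁻¹` of the quantum determinant in `ℂ_q[U_n]`. -/
noncomputable def dinv (q : ℝ) (n : ℕ) : Uq q n :=
  RingQuot.mkAlgHom ℂ (uqRel q n) (FreeAlgebra.ι ℂ (Sum.inr ()))


section SumRent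


variable {n : ℕ} {A : Type*} [AddCommMonoid A] [Module ℂ A]

lemma sum_Rent (qr : ℝ) (a c : Fin n) (M : Fin n → Fin n → A) :
    (∑ w : Fin n, ∑ x : Fin n, Rent qr a c w x • M w x)
      = (if a = c then (qr : ℂ) else 1) • M c a
        + (((qr : ℂ) - (qr : ℂ)⁻¹) * if a < c then 1 else 0) • M a c := by
  have key : ∀ w x, Rent qr a c w x • M w x =
      (if a = x then (if c = w then ((if a = c then (qr : ℂ) else 1) • M w x) else 0) else 0)
      + (if c = x then (if a = w then ((((qr : ℂ) - (qr : ℂ)⁻¹) * if a < c then 1 else 0) • M w x)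
          else 0) else 0) := by
    intro w x
    unfold Rent
    rw [add_smul]
    congr 1 <;> split_ifs <;> simp_all
  simp only [key, Finset.sum_add_distrib, Finset.sum_ite_eq, Finset.mem_univ, if_true]

lemma sum_Rent' (qr : ℝ) (b d : Fin n) (M : Fin n → Fin n → A) :
    (∑ y : Fin n, ∑ z : Fin n, Rent qr y z b d • M y z)
      = (if b = d then (qr : ℂ) else 1) • M d b
        + (((qr : ℂ) - (qr : ℂ)⁻¹) * if b < d then 1 else 0) • M b d := by
  have key : ∀ y z, Rent qr y z b d • M y z =
      (if z = b then (if y = d then ((if b = d then (qr : ℂ) else 1) • M y z) else 0) else 0)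
      + (if z = d then (if y = b then ((((qr : ℂ) - (qr : ℂ)⁻¹) * if b < d then 1 else 0) • M y z)
          else 0) else 0) := by
    intro y z
    unfold Rent
    rw [add_smul]
    congr 1 <;> split_ifs <;> simp_all
  simp only [key, Finset.sum_add_distrib, Finset.sum_ite_eq', Finset.mem_univ, if_true]

end SumRent

section KerAlpha

open RingQuot

variable (q : ℝ) (N : ℕ)

/-- The submodule of elements expressible in the desired form. -/
noncomputable def Sgen : Submodule ℂ (SUq q (N + 2)) where
  carrier := {p | ∃ f g : Fin (N + 2) → SUq q (N + 2),
    p = (∑ i ∈ Finset.univ.filter (fun i : Fin (N + 2) => i ≠ 0),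
          ugen q (N + 2) i 0 * f i)
      + (∑ i ∈ Finset.univ.filter (fun i : Fin (N + 2) => i ≠ 0),
          ugen q (N + 2) 0 i * g i)}
  add_mem' := by
    rintro a b ⟨f, g, rfl⟩ ⟨f', g', rfl⟩
    refine ⟨f + f', g + g', ?_⟩
    simp only [Pi.add_apply, mul_add, Finset.sum_add_distrib]
    abel
  zero_mem' := ⟨0, 0, by simp⟩
  smul_mem' := by
    rintro c a ⟨f, g, rfl⟩
    refine ⟨c • f, c • g, ?_⟩
    simp only [Pi.smul_apply, smul_add, Finset.smul_sum, mul_smul_comm]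

lemma Sgen_mul_mem {p : SUq q (N + 2)} (hp : p ∈ Sgen q N) (x : SUq q (N + 2)) :
    p * x ∈ Sgen q N := by
  obtain ⟨f, g, rfl⟩ := hp
  refine ⟨fun i => f i * x, fun i => g i * x, ?_⟩
  simp only [add_mul, Finset.sum_mul, mul_assoc]

lemma col_mem {i : Fin (N + 2)} (hi : i ≠ 0) (x : SUq q (N + 2)) :
    ugen q (N + 2) i 0 * x ∈ Sgen q N := by
  refine ⟨fun j => if j = i then x else 0, 0, ?_⟩
  simp only [Pi.zero_apply, mul_zero, Finset.sum_const_zero, add_zero, mul_ite]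
  rw [Finset.sum_ite_eq' (Finset.univ.filter (fun i : Fin (N + 2) => i ≠ 0)) i
    (fun j => ugen q (N + 2) j 0 * x)]
  simp [hi]

lemma row_mem {i : Fin (N + 2)} (hi : i ≠ 0) (x : SUq q (N + 2)) :
    ugen q (N + 2) 0 i * x ∈ Sgen q N := by
  refine ⟨0, fun j => if j = i then x else 0, ?_⟩
  simp only [Pi.zero_apply, mul_zero, Finset.sum_const_zero, zero_add, mul_ite]
  rw [Finset.sum_ite_eq' (Finset.univ.filter (fun i : Fin (N + 2) => i ≠ 0)) i
    (fun j => ugen q (N + 2) 0 j * x)]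
  simp [hi]

/-- The image in `SUq` of the FRT relations, in closed form. -/
lemma frt_SU (a b c d : Fin (N + 2)) :
    (if a = c then (q : ℂ) else 1) • (ugen q (N + 2) c b * ugen q (N + 2) a d)
      + (((q : ℂ) - (q : ℂ)⁻¹) * if a < c then 1 else 0) •
          (ugen q (N + 2) a b * ugen q (N + 2) c d)
    = (if b = d then (q : ℂ) else 1) • (ugen q (N + 2) a d * ugen q (N + 2) c b)
      + (((q : ℂ) - (q : ℂ)⁻¹) * if b < d then 1 else 0) •
          (ugen q (N + 2) a b * ugen q (N + 2) c d) := by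
  have h := RingQuot.mkAlgHom_rel ℂ (suRel.frt (q := q) (N := N + 2) a b c d)
  simp only [map_sum, map_smul, map_mul] at h
  rw [sum_Rent q a c (fun w x => RingQuot.mkAlgHom ℂ (suRel q (N + 2)) (FreeAlgebra.ι ℂ (w, b))
        * RingQuot.mkAlgHom ℂ (suRel q (N + 2)) (FreeAlgebra.ι ℂ (x, d))),
      sum_Rent' q b d (fun y z => RingQuot.mkAlgHom ℂ (suRel q (N + 2)) (FreeAlgebra.ι ℂ (a, y))
        * RingQuot.mkAlgHom ℂ (suRel q (N + 2)) (FreeAlgebra.ι ℂ (c, z)))] at h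
  exact h

lemma pair_col_mem (hq : (q : ℂ) ≠ 0) (a b : Fin (N + 2)) {i : Fin (N + 2)} (hi : i ≠ 0) :
    ugen q (N + 2) a b * ugen q (N + 2) i 0 ∈ Sgen q N := by
  by_cases ha : a = 0
  · subst ha
    by_cases hb : b = 0
    · subst hb
      have h := frt_SU q N 0 0 i 0
      rw [if_neg (Ne.symm hi), if_pos rfl, if_pos (Fin.pos_iff_ne_zero.mpr hi),
        if_neg (lt_irrefl _), mul_one, mul_zero, zero_smul, add_zero, one_smul] at h
      have h2 : ugen q (N + 2) i 0 * ugen q (N + 2) 0 0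
          = ((q : ℂ)⁻¹) • (ugen q (N + 2) 0 0 * ugen q (N + 2) i 0) := by
        have h3 := eq_sub_of_add_eq h
        rw [h3]
        module
      have h4 : ugen q (N + 2) 0 0 * ugen q (N + 2) i 0
          = (q : ℂ) • (ugen q (N + 2) i 0 * ugen q (N + 2) 0 0) := by
        rw [h2, smul_smul, mul_inv_cancel₀ hq, one_smul]
      rw [h4]
      exact Submodule.smul_mem _ _ (col_mem q N hi _)
    · exact row_mem q N hb _
  · by_cases hb : b = 0
    · subst hb; exact col_mem q N ha _
    · have h := frt_SU q N a 0 i b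
      rw [if_neg (Ne.symm hb), if_pos (Fin.pos_iff_ne_zero.mpr hb), mul_one, one_smul] at h
      have h2 := eq_sub_of_add_eq h.symm
      rw [h2]
      exact sub_mem (add_mem (Submodule.smul_mem _ _ (col_mem q N hi _))
        (Submodule.smul_mem _ _ (col_mem q N ha _)))
        (Submodule.smul_mem _ _ (col_mem q N ha _))

lemma pair_row_mem (hq : (q : ℂ) ≠ 0) (a b : Fin (N + 2)) {j : Fin (N + 2)} (hj : j ≠ 0) :
    ugen q (N + 2) a b * ugen q (N + 2) 0 j ∈ Sgen q N := by
  by_cases ha : a = 0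
  · subst ha
    by_cases hb : b = 0
    · subst hb
      have h := frt_SU q N 0 0 0 j
      rw [if_pos rfl, if_neg (Ne.symm hj), if_pos (Fin.pos_iff_ne_zero.mpr hj),
        if_neg (lt_irrefl _), mul_one, mul_zero, zero_smul, add_zero, one_smul] at h
      have h2 : ugen q (N + 2) 0 j * ugen q (N + 2) 0 0
          = ((q : ℂ)⁻¹) • (ugen q (N + 2) 0 0 * ugen q (N + 2) 0 j) := by
        have h3 := eq_sub_of_add_eq h.symm
        rw [h3]
        module
      have h4 : ugen q (N + 2) 0 0 * ugen q (N + 2) 0 j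
          = (q : ℂ) • (ugen q (N + 2) 0 j * ugen q (N + 2) 0 0) := by
        rw [h2, smul_smul, mul_inv_cancel₀ hq, one_smul]
      rw [h4]
      exact Submodule.smul_mem _ _ (row_mem q N hj _)
    · exact row_mem q N hb _
  · by_cases hb : b = 0
    · subst hb; exact col_mem q N ha _
    · have h := frt_SU q N 0 b a j
      rw [if_neg (Ne.symm ha), if_pos (Fin.pos_iff_ne_zero.mpr ha), mul_one, one_smul] at h
      have h2 := eq_sub_of_add_eq h
      rw [h2]
      exact sub_mem (add_mem (Submodule.smul_mem _ _ (row_mem q N hj _))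
        (Submodule.smul_mem _ _ (row_mem q N hb _)))
        (Submodule.smul_mem _ _ (row_mem q N hb _))

lemma mul_mem_Sgen (hq : (q : ℂ) ≠ 0) (x : SUq q (N + 2)) {p : SUq q (N + 2)}
    (hp : p ∈ Sgen q N) : x * p ∈ Sgen q N := by
  obtain ⟨y, rfl⟩ := RingQuot.mkAlgHom_surjective ℂ (suRel q (N + 2)) x
  induction y using FreeAlgebra.induction generalizing p with
  | grade0 r =>
    rw [AlgHom.commutes, ← Algebra.smul_def]
    exact Submodule.smul_mem _ _ hp
  | grade1 t =>
    obtain ⟨f, g, rfl⟩ := hp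
    rw [mul_add, Finset.mul_sum, Finset.mul_sum]
    refine add_mem (Submodule.sum_mem _ fun k hk => ?_) (Submodule.sum_mem _ fun k hk => ?_)
    · rw [← mul_assoc]
      exact Sgen_mul_mem q N
        (pair_col_mem q N hq t.1 t.2 (Finset.mem_filter.mp hk).2) _
    · rw [← mul_assoc]
      exact Sgen_mul_mem q N
        (pair_row_mem q N hq t.1 t.2 (Finset.mem_filter.mp hk).2) _
  | mul y z ihy ihz =>
    rw [map_mul, mul_assoc]
    exact ihy (ihz hp)
  | add y z ihy ihz =>
    rw [map_add, add_mul]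
    exact add_mem (ihy hp) (ihz hp)

/-- The lift of generators of `ℂ_q[U_{N+1}]` into `ℂ_q[SU_{N+2}]`. -/
noncomputable def beta : FreeAlgebra ℂ ((Fin (N + 1) × Fin (N + 1)) ⊕ Unit) →ₐ[ℂ] SUq q (N + 2) :=
  FreeAlgebra.lift ℂ (Sum.elim (fun p => ugen q (N + 2) p.1.succ p.2.succ)
    (fun _ => ugen q (N + 2) 0 0))

lemma beta_inl (i j : Fin (N + 1)) :
    beta q N (FreeAlgebra.ι ℂ (Sum.inl (i, j))) = ugen q (N + 2) i.succ j.succ := by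
  simp [beta]

lemma beta_inr : beta q N (FreeAlgebra.ι ℂ (Sum.inr ())) = ugen q (N + 2) 0 0 := by
  simp [beta]

lemma beta_frt (a b c d : Fin (N + 1)) :
    beta q N (∑ w : Fin (N + 1), ∑ x : Fin (N + 1),
        Rent q a c w x • (FreeAlgebra.ι ℂ (Sum.inl (w, b)) * FreeAlgebra.ι ℂ (Sum.inl (x, d))))
    = beta q N (∑ y : Fin (N + 1), ∑ z : Fin (N + 1),
        Rent q y z b d • (FreeAlgebra.ι ℂ (Sum.inl (a, y)) * FreeAlgebra.ι ℂ (Sum.inl (c, z)))) := by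
  simp only [map_sum, map_smul, map_mul, beta_inl]
  rw [sum_Rent q a c (fun w x => ugen q (N + 2) w.succ b.succ * ugen q (N + 2) x.succ d.succ),
    sum_Rent' q b d (fun y z => ugen q (N + 2) a.succ y.succ * ugen q (N + 2) c.succ z.succ)]
  have h := frt_SU q N a.succ b.succ c.succ d.succ
  simpa [Fin.succ_inj, Fin.succ_lt_succ_iff, -Complex.coe_smul] using h

lemma beta_qdet : beta q N (qdetF' q (N + 1))
    = ∑ σ : Equiv.Perm (Fin (N + 1)),
        ((-(q : ℂ)) ^
          ((Finset.univ.filter fun p : Fin (N + 1) × Fin (N + 1) =>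
            p.1 < p.2 ∧ σ p.2 < σ p.1).card)) •
          (List.ofFn fun i : Fin (N + 1) => ugen q (N + 2) i.succ (σ i).succ).prod := by
  unfold qdetF'
  rw [map_sum]
  refine Finset.sum_congr rfl fun σ _ => ?_
  rw [map_smul]
  congr 1
  rw [map_list_prod, List.map_ofFn]
  refine congrArg List.prod (congrArg List.ofFn (funext fun i => ?_))
  simp [beta_inl]

lemma one_eq_qdet : (1 : SUq q (N + 2))
    = ∑ π : Equiv.Perm (Fin (N + 2)),
        ((-(q : ℂ)) ^
          ((Finset.univ.filter fun p : Fin (N + 2) × Fin (N + 2) =>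
            p.1 < p.2 ∧ π p.2 < π p.1).card)) •
          (List.ofFn fun i : Fin (N + 2) => ugen q (N + 2) i (π i)).prod := by
  have h := RingQuot.mkAlgHom_rel ℂ (suRel.det (q := q) (N := N + 2))
  rw [map_one] at h
  rw [← h]
  unfold qdetF
  rw [map_sum]
  refine Finset.sum_congr rfl fun π _ => ?_
  rw [map_smul]
  congr 1
  rw [map_list_prod, List.map_ofFn]
  refine congrArg List.prod (congrArg List.ofFn (funext fun i => ?_))
  simp [ugen, Function.comp]

lemma card_inv_eq (σ : Equiv.Perm (Fin (N + 1))) :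
    (Finset.univ.filter fun p : Fin (N + 2) × Fin (N + 2) => p.1 < p.2 ∧
      (Equiv.Perm.decomposeFin.symm (0, σ)) p.2 < (Equiv.Perm.decomposeFin.symm (0, σ)) p.1).card
    = (Finset.univ.filter fun p : Fin (N + 1) × Fin (N + 1) =>
        p.1 < p.2 ∧ σ p.2 < σ p.1).card := by
  have hπ0 : (Equiv.Perm.decomposeFin.symm (0, σ)) 0 = 0 :=
    Equiv.Perm.decomposeFin_symm_apply_zero 0 σ
  have hπs : ∀ i : Fin (N + 1), (Equiv.Perm.decomposeFin.symm (0, σ)) i.succ = (σ i).succ := by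
    intro i
    rw [Equiv.Perm.decomposeFin_symm_apply_succ]
    simp
  have himg : (Finset.univ.filter fun p : Fin (N + 2) × Fin (N + 2) => p.1 < p.2 ∧
      (Equiv.Perm.decomposeFin.symm (0, σ)) p.2 < (Equiv.Perm.decomposeFin.symm (0, σ)) p.1)
      = (Finset.univ.filter fun p : Fin (N + 1) × Fin (N + 1) =>
          p.1 < p.2 ∧ σ p.2 < σ p.1).image (fun p => (p.1.succ, p.2.succ)) := by
    ext ⟨x, y⟩
    simp only [Finset.mem_filter, Finset.mem_univ, true_and, Finset.mem_image, Prod.mk.injEq,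
      Prod.exists]
    constructor
    · rintro ⟨hxy, hπ⟩
      have hx0 : x ≠ 0 := by
        rintro rfl
        rw [hπ0] at hπ
        exact Fin.not_lt_zero _ hπ
      have hy0 : y ≠ 0 := by
        rintro rfl
        exact Fin.not_lt_zero _ hxy
      obtain ⟨x', rfl⟩ := Fin.exists_succ_eq.mpr hx0
      obtain ⟨y', rfl⟩ := Fin.exists_succ_eq.mpr hy0
      rw [hπs, hπs] at hπ
      exact ⟨x', y', ⟨Fin.succ_lt_succ_iff.mp hxy, Fin.succ_lt_succ_iff.mp hπ⟩, rfl, rfl⟩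
    · rintro ⟨x', y', ⟨h1, h2⟩, rfl, rfl⟩
      rw [hπs, hπs]
      exact ⟨Fin.succ_lt_succ_iff.mpr h1, Fin.succ_lt_succ_iff.mpr h2⟩
  rw [himg, Finset.card_image_of_injective]
  intro p p' h
  have h1 := congrArg Prod.fst h
  have h2 := congrArg Prod.snd h
  simp only at h1 h2
  exact Prod.ext (Fin.succ_injective _ h1) (Fin.succ_injective _ h2)

lemma det_left : ugen q (N + 2) 0 0 * beta q N (qdetF' q (N + 1)) - 1 ∈ Sgen q N := by
  have h1 := one_eq_qdet q N
  rw [← Equiv.sum_comp (Equiv.Perm.decomposeFin.symm)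
    (fun π : Equiv.Perm (Fin (N + 2)) =>
      ((-(q : ℂ)) ^ ((Finset.univ.filter fun p : Fin (N + 2) × Fin (N + 2) =>
        p.1 < p.2 ∧ π p.2 < π p.1).card)) •
        (List.ofFn fun i : Fin (N + 2) => ugen q (N + 2) i (π i)).prod)] at h1
  rw [Fintype.sum_prod_type, Fin.sum_univ_succ] at h1
  have hfirst : (∑ σ : Equiv.Perm (Fin (N + 1)),
      ((-(q : ℂ)) ^ ((Finset.univ.filter fun p : Fin (N + 2) × Fin (N + 2) =>
        p.1 < p.2 ∧ (Equiv.Perm.decomposeFin.symm (0, σ)) p.2 <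
          (Equiv.Perm.decomposeFin.symm (0, σ)) p.1).card)) •
        (List.ofFn fun i : Fin (N + 2) =>
          ugen q (N + 2) i ((Equiv.Perm.decomposeFin.symm (0, σ)) i)).prod)
      = ugen q (N + 2) 0 0 * beta q N (qdetF' q (N + 1)) := by
    rw [beta_qdet, Finset.mul_sum]
    refine Finset.sum_congr rfl fun σ _ => ?_
    rw [mul_smul_comm, card_inv_eq]
    congr 1
    rw [List.ofFn_succ, List.prod_cons, Equiv.Perm.decomposeFin_symm_apply_zero]
    refine congrArg _ (congrArg List.prod (congrArg List.ofFn (funext fun i => ?_)))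
    rw [Equiv.Perm.decomposeFin_symm_apply_succ]
    simp
  rw [hfirst] at h1
  have hrest : (∑ i : Fin (N + 1), ∑ σ : Equiv.Perm (Fin (N + 1)),
      ((-(q : ℂ)) ^ ((Finset.univ.filter fun p : Fin (N + 2) × Fin (N + 2) =>
        p.1 < p.2 ∧ (Equiv.Perm.decomposeFin.symm (i.succ, σ)) p.2 <
          (Equiv.Perm.decomposeFin.symm (i.succ, σ)) p.1).card)) •
        (List.ofFn fun k : Fin (N + 2) =>
          ugen q (N + 2) k ((Equiv.Perm.decomposeFin.symm (i.succ, σ)) k)).prod) ∈ Sgen q N := by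
    refine Submodule.sum_mem _ fun i _ => Submodule.sum_mem _ fun σ _ => ?_
    rw [List.ofFn_succ, List.prod_cons, Equiv.Perm.decomposeFin_symm_apply_zero]
    exact Submodule.smul_mem _ _ (row_mem q N (Fin.succ_ne_zero i) _)
  have h2 : ugen q (N + 2) 0 0 * beta q N (qdetF' q (N + 1)) - 1
      = -(∑ i : Fin (N + 1), ∑ σ : Equiv.Perm (Fin (N + 1)),
      ((-(q : ℂ)) ^ ((Finset.univ.filter fun p : Fin (N + 2) × Fin (N + 2) =>
        p.1 < p.2 ∧ (Equiv.Perm.decomposeFin.symm (i.succ, σ)) p.2 <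
          (Equiv.Perm.decomposeFin.symm (i.succ, σ)) p.1).card)) •
        (List.ofFn fun k : Fin (N + 2) =>
          ugen q (N + 2) k ((Equiv.Perm.decomposeFin.symm (i.succ, σ)) k)).prod) := by
    nth_rewrite 1 [h1]
    abel
  rw [h2]
  exact neg_mem hrest

lemma comm_beta (hq : (q : ℂ) ≠ 0) (y : FreeAlgebra ℂ ((Fin (N + 1) × Fin (N + 1)) ⊕ Unit)) :
    ugen q (N + 2) 0 0 * beta q N y - beta q N y * ugen q (N + 2) 0 0 ∈ Sgen q N := by
  induction y using FreeAlgebra.induction with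
  | grade0 r =>
    rw [AlgHom.commutes, Algebra.commutes r (ugen q (N + 2) 0 0), sub_self]
    exact zero_mem _
  | grade1 t =>
    rcases t with ⟨i, j⟩ | u
    · rw [beta_inl]
      have h := frt_SU q N 0 j.succ i.succ 0
      rw [if_neg (Ne.symm (Fin.succ_ne_zero i)), if_pos (Fin.succ_pos i),
        if_neg (Fin.succ_ne_zero j), if_neg (Fin.not_lt_zero _), mul_one, mul_zero,
        zero_smul, add_zero, one_smul, one_smul] at h
      have h2 : ugen q (N + 2) 0 0 * ugen q (N + 2) i.succ j.succ
          - ugen q (N + 2) i.succ j.succ * ugen q (N + 2) 0 0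
          = ((q : ℂ) - (q : ℂ)⁻¹) • (ugen q (N + 2) 0 j.succ * ugen q (N + 2) i.succ 0) := by
        rw [← h]
        abel
      rw [h2]
      exact Submodule.smul_mem _ _ (row_mem q N (Fin.succ_ne_zero j) _)
    · rw [beta_inr, sub_self]
      exact zero_mem _
  | mul a b iha ihb =>
    rw [map_mul]
    have h : ugen q (N + 2) 0 0 * (beta q N a * beta q N b)
        - beta q N a * beta q N b * ugen q (N + 2) 0 0
        = (ugen q (N + 2) 0 0 * beta q N a - beta q N a * ugen q (N + 2) 0 0) * beta q N b
          + beta q N a * (ugen q (N + 2) 0 0 * beta q N b - beta q N b * ugen q (N + 2) 0 0) := by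
      simp only [mul_sub, sub_mul, mul_assoc]
      abel
    rw [h]
    exact add_mem (Sgen_mul_mem q N iha _) (mul_mem_Sgen q N hq _ ihb)
  | add a b iha ihb =>
    rw [map_add]
    have h : ugen q (N + 2) 0 0 * (beta q N a + beta q N b)
        - (beta q N a + beta q N b) * ugen q (N + 2) 0 0
        = (ugen q (N + 2) 0 0 * beta q N a - beta q N a * ugen q (N + 2) 0 0)
          + (ugen q (N + 2) 0 0 * beta q N b - beta q N b * ugen q (N + 2) 0 0) := by
      noncomm_ring
    rw [h]
    exact add_mem iha ihb

lemma det_right (hq : (q : ℂ) ≠ 0) :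
    beta q N (qdetF' q (N + 1)) * ugen q (N + 2) 0 0 - 1 ∈ Sgen q N := by
  have h1 := det_left q N
  have h2 := comm_beta q N hq (qdetF' q (N + 1))
  have h3 : beta q N (qdetF' q (N + 1)) * ugen q (N + 2) 0 0 - 1
      = (ugen q (N + 2) 0 0 * beta q N (qdetF' q (N + 1)) - 1)
        - (ugen q (N + 2) 0 0 * beta q N (qdetF' q (N + 1))
            - beta q N (qdetF' q (N + 1)) * ugen q (N + 2) 0 0) := by
    abel
  rw [h3]
  exact sub_mem h1 h2

lemma rel_beta_mem (hq : (q : ℂ) ≠ 0) :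
    ∀ ⦃a b : FreeAlgebra ℂ ((Fin (N + 1) × Fin (N + 1)) ⊕ Unit)⦄,
      RingQuot.Rel (uqRel q (N + 1)) a b → beta q N a - beta q N b ∈ Sgen q N := by
  intro a b h
  induction h with
  | of h =>
    cases h with
    | frt a b c d =>
      rw [beta_frt, sub_self]
      exact zero_mem _
    | detinv_left =>
      rw [map_mul, map_one, beta_inr]
      exact det_left q N
    | detinv_right =>
      rw [map_mul, map_one, beta_inr]
      exact det_right q N hq
  | add_left h ih =>
    rw [map_add, map_add, add_sub_add_right_eq_sub]
    exact ih
  | mul_left h ih =>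
    rw [map_mul, map_mul, ← sub_mul]
    exact Sgen_mul_mem q N ih _
  | mul_right h ih =>
    rw [map_mul, map_mul, ← mul_sub]
    exact mul_mem_Sgen q N hq _ ih

lemma beta_mem_of_mk_eq_zero (hq : (q : ℂ) ≠ 0)
    (y : FreeAlgebra ℂ ((Fin (N + 1) × Fin (N + 1)) ⊕ Unit))
    (h : RingQuot.mkAlgHom ℂ (uqRel q (N + 1)) y = 0) : beta q N y ∈ Sgen q N := by
  have hsound : ∀ (a b : FreeAlgebra ℂ ((Fin (N + 1) × Fin (N + 1)) ⊕ Unit)),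
      RingQuot.Rel (uqRel q (N + 1)) a b →
        (beta q N a ∈ Sgen q N) = (beta q N b ∈ Sgen q N) := by
    intro a b hab
    have h1 := rel_beta_mem q N hq hab
    refine propext ⟨fun ha => ?_, fun hb => ?_⟩
    · have : beta q N b = beta q N a - (beta q N a - beta q N b) := by abel
      rw [this]
      exact sub_mem ha h1
    · have : beta q N a = (beta q N a - beta q N b) + beta q N b := by abel
      rw [this]
      exact add_mem h1 hb
  have hq1 : (RingQuot.mkAlgHom ℂ (uqRel q (N + 1)) y)
      = (⟨Quot.mk _ y⟩ : RingQuot (uqRel q (N + 1))) := by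
    simp [RingQuot.mkAlgHom_def, RingQuot.mkRingHom_def]
  have hq2 : (⟨Quot.mk _ y⟩ : RingQuot (uqRel q (N + 1)))
      = (⟨Quot.mk _ 0⟩ : RingQuot (uqRel q (N + 1))) := by
    rw [RingQuot.zero_quot, ← hq1, h]
  have hq3 : Quot.mk (RingQuot.Rel (uqRel q (N + 1))) y
      = Quot.mk (RingQuot.Rel (uqRel q (N + 1))) 0 := congrArg RingQuot.toQuot hq2
  have key : Quot.lift (fun z => beta q N z ∈ Sgen q N) hsound (Quot.mk _ y)
      = Quot.lift (fun z => beta q N z ∈ Sgen q N) hsound (Quot.mk _ 0) := by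
    rw [hq3]
  simp only [Quot.lift_mk] at key
  rw [key, map_zero]
  exact zero_mem _

lemma ugen_eq (i j : Fin (N + 2)) :
    RingQuot.mkAlgHom ℂ (suRel q (N + 2)) (FreeAlgebra.ι ℂ (i, j)) = ugen q (N + 2) i j := rfl

lemma main_ind (hq : (q : ℂ) ≠ 0) (α : SUq q (N + 2) →ₐ[ℂ] Uq q (N + 1))
    (h00 : α (ugen q (N + 2) 0 0) = dinv q (N + 1))
    (h0i : ∀ i : Fin (N + 2), i ≠ 0 →
      α (ugen q (N + 2) 0 i) = 0 ∧ α (ugen q (N + 2) i 0) = 0)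
    (hij : ∀ (i j : Fin (N + 2)) (hi : i ≠ 0) (hj : j ≠ 0),
      α (ugen q (N + 2) i j) = upgen q (N + 1) (i.pred hi) (j.pred hj)) :
    ∀ x : FreeAlgebra ℂ (Fin (N + 2) × Fin (N + 2)),
      ∃ y, α (RingQuot.mkAlgHom ℂ (suRel q (N + 2)) x)
          = RingQuot.mkAlgHom ℂ (uqRel q (N + 1)) y
        ∧ RingQuot.mkAlgHom ℂ (suRel q (N + 2)) x - beta q N y ∈ Sgen q N := by
  intro x
  induction x using FreeAlgebra.induction with
  | grade0 r =>
    refine ⟨algebraMap ℂ _ r, ?_, ?_⟩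
    · rw [AlgHom.commutes, AlgHom.commutes, AlgHom.commutes]
    · rw [AlgHom.commutes, AlgHom.commutes, sub_self]
      exact zero_mem _
  | grade1 t =>
    obtain ⟨i, j⟩ := t
    by_cases hi : i = 0
    · subst hi
      by_cases hj : j = 0
      · subst hj
        refine ⟨FreeAlgebra.ι ℂ (Sum.inr ()), ?_, ?_⟩
        · rw [ugen_eq]
          exact h00
        · rw [beta_inr, ugen_eq, sub_self]
          exact zero_mem _
      · refine ⟨0, ?_, ?_⟩
        · rw [map_zero, ugen_eq]
          exact (h0i j hj).1
        · rw [map_zero, sub_zero, ugen_eq]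
          simpa using row_mem q N hj 1
    · by_cases hj : j = 0
      · subst hj
        refine ⟨0, ?_, ?_⟩
        · rw [map_zero, ugen_eq]
          exact (h0i i hi).2
        · rw [map_zero, sub_zero, ugen_eq]
          simpa using col_mem q N hi 1
      · refine ⟨FreeAlgebra.ι ℂ (Sum.inl (i.pred hi, j.pred hj)), ?_, ?_⟩
        · rw [ugen_eq]
          exact hij i j hi hj
        · rw [beta_inl, ugen_eq, Fin.succ_pred, Fin.succ_pred, sub_self]
          exact zero_mem _
  | mul a b iha ihb =>
    obtain ⟨y1, hy1, hy1'⟩ := iha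
    obtain ⟨y2, hy2, hy2'⟩ := ihb
    refine ⟨y1 * y2, ?_, ?_⟩
    · rw [map_mul, map_mul, hy1, hy2, ← map_mul]
    · rw [map_mul, map_mul]
      have h : RingQuot.mkAlgHom ℂ (suRel q (N + 2)) a * RingQuot.mkAlgHom ℂ (suRel q (N + 2)) b
          - beta q N y1 * beta q N y2
          = (RingQuot.mkAlgHom ℂ (suRel q (N + 2)) a - beta q N y1)
              * RingQuot.mkAlgHom ℂ (suRel q (N + 2)) b
            + beta q N y1 * (RingQuot.mkAlgHom ℂ (suRel q (N + 2)) b - beta q N y2) := by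
        simp only [mul_sub, sub_mul]
        abel
      rw [h]
      exact add_mem (Sgen_mul_mem q N hy1' _) (mul_mem_Sgen q N hq _ hy2')
  | add a b iha ihb =>
    obtain ⟨y1, hy1, hy1'⟩ := iha
    obtain ⟨y2, hy2, hy2'⟩ := ihb
    refine ⟨y1 + y2, ?_, ?_⟩
    · rw [map_add, map_add, hy1, hy2, map_add]
    · rw [map_add, map_add, add_sub_add_comm]
      exact add_mem hy1' hy2'

end KerAlpha

/-- Every element of the kernel of the Hopf algebra surjection
`α_N : ℂ_q[SU_N] → ℂ_q[U_{N−1}]` (determined by `α_N(u^1_1) = det_{N−1}⁻¹`,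
`α_N(u^1_i) = α_N(u^i_1) = 0` for `i ≠ 1` and `α_N(u^i_j) = u^{i−1}_{j−1}` for
`i,j ≥ 2`) can be written as `p = Σ_{i=2}^N u^i_1 f_i + Σ_{i=2}^N u^1_i g_i`.
(Here `N` is written as `N+2` to express `N ≥ 2`.) -/
theorem ker_alpha_generated (q : ℝ) (hq0 : 0 < q) (hq1 : q ≤ 1) (N : ℕ)
    (α : SUq q (N + 2) →ₐ[ℂ] Uq q (N + 1))
    (h00 : α (ugen q (N + 2) 0 0) = dinv q (N + 1))
    (h0i : ∀ i : Fin (N + 2), i ≠ 0 →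
      α (ugen q (N + 2) 0 i) = 0 ∧ α (ugen q (N + 2) i 0) = 0)
    (hij : ∀ (i j : Fin (N + 2)) (hi : i ≠ 0) (hj : j ≠ 0),
      α (ugen q (N + 2) i j) = upgen q (N + 1) (i.pred hi) (j.pred hj)) :
    ∀ p : SUq q (N + 2), α p = 0 →
      ∃ f g : Fin (N + 2) → SUq q (N + 2),
        p = (∑ i ∈ Finset.univ.filter (fun i : Fin (N + 2) => i ≠ 0),
              ugen q (N + 2) i 0 * f i)
          + (∑ i ∈ Finset.univ.filter (fun i : Fin (N + 2) => i ≠ 0),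
              ugen q (N + 2) 0 i * g i) := by
  intro p hp
  have hq : (q : ℂ) ≠ 0 := Complex.ofReal_ne_zero.mpr hq0.ne'
  obtain ⟨x, rfl⟩ := RingQuot.mkAlgHom_surjective ℂ (suRel q (N + 2)) p
  obtain ⟨y, hy, hy'⟩ := main_ind q N hq α h00 h0i hij x
  rw [hp] at hy
  have hb := beta_mem_of_mk_eq_zero q N hq y hy.symm
  have hmem : RingQuot.mkAlgHom ℂ (suRel q (N + 2)) x ∈ Sgen q N := by
    have h2 := add_mem hy' hb
    rwa [sub_add_cancel] at h2
  obtain ⟨f, g, hfg⟩ := hmem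
  exact ⟨f, g, hfg⟩
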